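/- Let F_q be a finite field with q elements of characteristic greater than 2. Any non-trivial rotation of F_q² can be written as a composition 𝒮₂ ∘ 𝒮₁ of an ordered pair of reflections in exactly q−1 ways when q ≡ 1 (mod 4), and in exactly q+1 ways when q ≡ 3 (mod 4). Any translation by a vector d with ‖d‖ ≠ 0 can be written as a composition of an ordered pair of reflections in exactly q ways. A non-trivial translation by a vector d with ‖d‖ = 0 cannot be written as a composition of a pair of reflections. -/

import Mathlib

/-- The "norm" of a point of `F × F`: `‖(x₁,x₂)‖ = x₁² + x₂²`. -/
def nrm {F : Type*} [Field F] (x : F × F) : F := x.1 ^ 2 + x.2 ^ 2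

/-- The linear map given by the rotation matrix `[[a,−b],[b,a]]`. -/
def rotLin {F : Type*} [Field F] (a b : F) (v : F × F) : F × F :=
  (a * v.1 - b * v.2, b * v.1 + a * v.2)

/-- The linear map given by the reflection matrix `[[a,b],[b,−a]]`. -/
def refLin {F : Type*} [Field F] (a b : F) (v : F × F) : F × F :=
  (a * v.1 + b * v.2, b * v.1 - a * v.2)

/-- The rotation about `u` by the rotation matrix `[[a,−b],[b,a]]`: `v ↦ R(v−u)+u`. -/
def rotAbout {F : Type*} [Field F] (a b : F) (u : F × F) : (F × F) → (F × F) :=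
  fun v => rotLin a b (v - u) + u

/-- The reflection about `u` by the reflection matrix `[[a,b],[b,−a]]`: `v ↦ S(v−u)+u`. -/
def refAbout {F : Type*} [Field F] (a b : F) (u : F × F) : (F × F) → (F × F) :=
  fun v => refLin a b (v - u) + u

/-- `f` is a reflection of `F²`. -/
def IsReflection {F : Type*} [Field F] (f : (F × F) → (F × F)) : Prop :=
  ∃ a b : F, a ^ 2 + b ^ 2 = 1 ∧ ∃ u : F × F, f = refAbout a b u

/-- The set of ordered pairs of reflections `(𝒮₁, 𝒮₂)` whose composition `𝒮₂ ∘ 𝒮₁` is `f`. -/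
def reflDecomps {F : Type*} [Field F] (f : (F × F) → (F × F)) :
    Set (((F × F) → (F × F)) × ((F × F) → (F × F))) :=
  {p | IsReflection p.1 ∧ IsReflection p.2 ∧ p.2 ∘ p.1 = f}


section Aux

variable {F : Type*} [Field F]

lemma refLin_eq_neg_iff {a b : F} {c : F × F} :
    refLin a b c = -c ↔ a * c.1 + b * c.2 = -c.1 ∧ b * c.1 - a * c.2 = -c.2 := by
  simp [refLin, Prod.ext_iff]

/-- The parameter set for decompositions of `v ↦ R v + t`. -/
def Tset (A B : F) (t : F × F) : Set ((F × F) × (F × F)) :=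
  {x | x.1.1 ^ 2 + x.1.2 ^ 2 = 1 ∧ refLin x.1.1 x.1.2 x.2 = -x.2 ∧
    refLin (A * x.1.1 - B * x.1.2) (A * x.1.2 + B * x.1.1) (rotLin A B x.2 + t)
      = -(rotLin A B x.2 + t)}

/-- The map from parameters to pairs of reflections. -/
def Psi (A B : F) (t : F × F) (x : (F × F) × (F × F)) :
    ((F × F) → (F × F)) × ((F × F) → (F × F)) :=
  (fun v => refLin x.1.1 x.1.2 v + x.2,
   fun v => rotLin A B (refLin x.1.1 x.1.2 v + x.2) + t)

lemma isReflection_of (h2 : (2 : F) ≠ 0) {a b : F} (hab : a ^ 2 + b ^ 2 = 1) {c : F × F}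
    (hc : refLin a b c = -c) : IsReflection (fun v => refLin a b v + c) := by
  obtain ⟨hc1, hc2⟩ := refLin_eq_neg_iff.mp hc
  have h2' : (2 : F)⁻¹ * 2 = 1 := inv_mul_cancel₀ h2
  refine ⟨a, b, hab, (2⁻¹ * c.1, 2⁻¹ * c.2), funext fun v => ?_⟩
  simp only [refAbout, refLin, Prod.ext_iff, Prod.fst_add, Prod.snd_add, Prod.fst_sub,
    Prod.snd_sub]
  constructor
  · linear_combination ((2:F)⁻¹) * hc1 - c.1 * h2'
  · linear_combination ((2:F)⁻¹) * hc2 - c.2 * h2'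

lemma psi_mem {A B : F} (hAB : A ^ 2 + B ^ 2 = 1) (t : F × F) (h2 : (2 : F) ≠ 0)
    {x : (F × F) × (F × F)} (hx : x ∈ Tset A B t) :
    Psi A B t x ∈ reflDecomps (fun v => rotLin A B v + t) := by
  obtain ⟨⟨a, b⟩, c⟩ := x
  obtain ⟨hab, hc, hc'⟩ := hx
  simp only at hab hc hc'
  obtain ⟨hc1, hc2⟩ := refLin_eq_neg_iff.mp hc
  refine ⟨isReflection_of h2 hab hc, ?_, ?_⟩
  · have key : (fun v => rotLin A B (refLin a b v + c) + t)
        = fun v => refLin (A * a - B * b) (A * b + B * a) v + (rotLin A B c + t) := by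
      funext v
      simp only [rotLin, refLin, Prod.ext_iff, Prod.fst_add, Prod.snd_add]
      constructor <;> ring
    show IsReflection (fun v => rotLin A B (refLin a b v + c) + t)
    rw [key]
    exact isReflection_of h2 (by linear_combination (A^2 + B^2) * hab + hAB) hc'
  · funext v
    simp only [Psi, Function.comp_apply, rotLin, refLin, Prod.ext_iff, Prod.fst_add,
      Prod.snd_add]
    constructor
    · linear_combination (A * v.1 - B * v.2) * hab + A * hc1 - B * hc2
    · linear_combination (B * v.1 + A * v.2) * hab + B * hc1 + A * hc2

lemma refLin_zero {a b : F} : refLin a b 0 = 0 := by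
  simp [refLin, Prod.ext_iff]

lemma decomps_eq_image {A B : F} (hAB : A ^ 2 + B ^ 2 = 1) (t : F × F) (h2 : (2 : F) ≠ 0) :
    reflDecomps (fun v => rotLin A B v + t) = Psi A B t '' Tset A B t := by
  apply Set.Subset.antisymm
  · rintro ⟨g₁, g₂⟩ ⟨⟨a, b, hab, u, hg1⟩, hr2, hcomp⟩
    simp only at hg1 hcomp
    set c : F × F := u - refLin a b u with hcdef
    have hg1' : g₁ = fun v => refLin a b v + c := by
      rw [hg1]; funext v
      simp only [refAbout, refLin, Prod.ext_iff, Prod.fst_add, Prod.snd_add, Prod.fst_sub,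
        Prod.snd_sub, hcdef]
      constructor <;> ring
    have hc : refLin a b c = -c := by
      rw [refLin_eq_neg_iff]
      simp only [hcdef, refLin, Prod.fst_sub, Prod.snd_sub, Prod.fst_neg, Prod.snd_neg]
      constructor
      · linear_combination (-u.1) * hab
      · linear_combination (-u.2) * hab
    obtain ⟨hc1, hc2⟩ := refLin_eq_neg_iff.mp hc
    have hinv : ∀ v, g₁ (g₁ v) = v := by
      intro v
      rw [hg1']
      simp only [refLin, Prod.ext_iff, Prod.fst_add, Prod.snd_add]
      constructor
      · linear_combination v.1 * hab + hc1
      · linear_combination v.2 * hab + hc2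
    have hg2 : g₂ = fun v => rotLin A B (refLin a b v + c) + t := by
      funext v
      have h := congrFun hcomp (g₁ v)
      simp only [Function.comp_apply, hinv v] at h
      rw [h, hg1']
    refine ⟨((a, b), c), ⟨hab, hc, ?_⟩, ?_⟩
    · -- third condition
      obtain ⟨a₂, b₂, hab₂, u₂, hg2''⟩ := hr2
      replace hg2'' : g₂ = refAbout a₂ b₂ u₂ := hg2''
      set c₂ : F × F := u₂ - refLin a₂ b₂ u₂ with hc2def
      have hg2' : g₂ = fun v => refLin a₂ b₂ v + c₂ := by
        rw [hg2'']; funext v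
        simp only [refAbout, refLin, Prod.ext_iff, Prod.fst_add, Prod.snd_add, Prod.fst_sub,
          Prod.snd_sub, hc2def]
        constructor <;> ring
      have hcc : refLin a₂ b₂ c₂ = -c₂ := by
        rw [refLin_eq_neg_iff]
        simp only [hc2def, refLin, Prod.fst_sub, Prod.snd_sub, Prod.fst_neg, Prod.snd_neg]
        constructor
        · linear_combination (-u₂.1) * hab₂
        · linear_combination (-u₂.2) * hab₂
      obtain ⟨hcc1, hcc2⟩ := refLin_eq_neg_iff.mp hcc
      have hfun : (fun v => refLin a₂ b₂ v + c₂) = fun v => rotLin A B (refLin a b v + c) + t :=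
        hg2'.symm.trans hg2
      have h0 := congrFun hfun 0
      simp only [refLin_zero, zero_add] at h0
      obtain ⟨h01, h02⟩ := Prod.ext_iff.mp h0
      simp only [refLin, rotLin, Prod.fst_add, Prod.snd_add, Prod.fst_zero, Prod.snd_zero] at h01 h02
      have hv := congrFun hfun (rotLin A B c + t)
      obtain ⟨hv1, hv2⟩ := Prod.ext_iff.mp hv
      simp only [refLin, rotLin, Prod.fst_add, Prod.snd_add] at hv1 hv2
      rw [refLin_eq_neg_iff]
      simp only [refLin, rotLin, Prod.fst_add, Prod.snd_add, Prod.fst_neg, Prod.snd_neg]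
      constructor
      · linear_combination -hv1 - a₂ * h01 - b₂ * h02 + hcc1
      · linear_combination -hv2 - b₂ * h01 + a₂ * h02 + hcc2
    · rw [Psi]
      simp only
      exact Prod.ext hg1'.symm hg2.symm
  · rintro q ⟨x, hx, rfl⟩
    exact psi_mem hAB t h2 hx

lemma psi_injOn (A B : F) (t : F × F) : Set.InjOn (Psi A B t) (Tset A B t) := by
  rintro ⟨⟨a, b⟩, c⟩ - ⟨⟨a', b'⟩, c'⟩ - h
  have h1 : (fun v => refLin a b v + c) = fun v => refLin a' b' v + c' :=
    congrArg Prod.fst h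
  have e0 := congrFun h1 0
  simp only [refLin_zero, zero_add] at e0
  have e1 := congrFun h1 ((1 : F), (0 : F))
  obtain ⟨f1, f2⟩ := Prod.ext_iff.mp e1
  simp only [refLin, Prod.fst_add, Prod.snd_add, e0] at f1 f2
  simp only [Prod.mk.injEq]
  exact ⟨⟨by linear_combination f1, by linear_combination f2⟩, e0⟩

lemma ncard_decomps {A B : F} (hAB : A ^ 2 + B ^ 2 = 1) (t : F × F) (h2 : (2 : F) ≠ 0) :
    (reflDecomps (fun v => rotLin A B v + t)).ncard = (Tset A B t).ncard := by
  rw [decomps_eq_image hAB t h2, Set.ncard_image_of_injOn (psi_injOn A B t)]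

lemma mem_tset_iff {A B a b : F} {c t : F × F} :
    ((a, b), c) ∈ Tset A B t ↔
      a ^ 2 + b ^ 2 = 1 ∧ (a * c.1 + b * c.2 = -c.1 ∧ b * c.1 - a * c.2 = -c.2) ∧
        ((A * a - B * b) * (A * c.1 - B * c.2 + t.1) + (A * b + B * a) * (B * c.1 + A * c.2 + t.2)
            = -(A * c.1 - B * c.2 + t.1) ∧
          (A * b + B * a) * (A * c.1 - B * c.2 + t.1) - (A * a - B * b) * (B * c.1 + A * c.2 + t.2)
            = -(B * c.1 + A * c.2 + t.2)) := by
  simp only [Tset, Set.mem_setOf_eq, refLin_eq_neg_iff, rotLin, Prod.fst_add, Prod.snd_add]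

end Aux

set_option maxHeartbeats 2000000 in
lemma tset_rot_ncard {F : Type*} [Field F] {A B : F} (hAB : A ^ 2 + B ^ 2 = 1) (hA : A ≠ 1)
    (h2 : (2 : F) ≠ 0) (t : F × F) :
    (Tset A B t).ncard = {p : F × F | p.1 ^ 2 + p.2 ^ 2 = 1}.ncard := by
  have hden : (2 : F) - 2 * A ≠ 0 := by
    intro h
    apply hA
    have h' : (2 : F) * (1 - A) = 0 := by linear_combination h
    rcases mul_eq_zero.mp h' with h'' | h''
    · exact absurd h'' h2
    · exact (sub_eq_zero.mp h'').symm
  have hinj : Set.InjOn (fun x : (F × F) × (F × F) => x.1) (Tset A B t) := by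
    rintro ⟨⟨a, b⟩, c⟩ hx ⟨⟨a', b'⟩, d⟩ hy h
    simp only [Prod.mk.injEq] at h ⊢
    obtain ⟨rfl, rfl⟩ := h
    refine ⟨⟨rfl, rfl⟩, ?_⟩
    obtain ⟨hab, ⟨H1, H2⟩, H3, H4⟩ := mem_tset_iff.mp hx
    obtain ⟨-, ⟨K1, K2⟩, K3, K4⟩ := mem_tset_iff.mp hy
    have key1 : ((2 : F) - 2 * A) * (c.1 - d.1) = 0 := by
      linear_combination ((1 : F)*b*B + (1 : F)*a*B*B + (-1 : F)*a*A + (1 : F)*a*A*A) * H3 + ((-1 : F)*b*B + (-1 : F)*a*B*B + (1 : F)*a*A + (-1 : F)*a*A*A) * K3 + ((1 : F)*b*B*B + (-1 : F)*b*A + (1 : F)*b*A*A + (-1 : F)*a*B) * H4 + ((-1 : F)*b*B*B + (1 : F)*b*A + (-1 : F)*b*A*A + (1 : F)*a*B) * K4 + ((1 : F)*d.1 + (-1 : F)*c.1 + (-1 : F)*b*d.2 + (1 : F)*b*c.2 + (1 : F)*b*B*d.1 + (-1 : F)*b*B*c.1 + (1 : F)*b*A*d.2 + (-1 : F)*b*A*c.2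 + (1 : F)*b*b*B*d.2 + (-1 : F)*b*b*B*c.2 + (1 : F)*b*b*B*B*d.1 + (-1 : F)*b*b*B*B*c.1 + (-1 : F)*b*b*A*d.1 + (1 : F)*b*b*A*c.1 + (1 : F)*b*b*A*A*d.1 + (-1 : F)*b*b*A*A*c.1 + (-1 : F)*a*d.1 + (1 : F)*a*c.1 + (-1 : F)*a*B*d.2 + (1 : F)*a*B*c.2 + (1 : F)*a*A*d.1 + (-1 : F)*a*A*c.1 + (1 : F)*a*a*B*d.2 + (-1 : F)*a*a*B*c.2 + (1 : F)*a*a*B*B*d.1 + (-1 : F)*a*a*B*B*c.1 + (-1 : F)*a*a*A*d.1 + (1 : F)*a*a*A*c.1 + (1 : F)*a*a*A*A*d.1 + (-1 : F)*a*a*A*A*c.1) * hAB + ((-1 : F)*b*B + (1 : F)*a + (-1 : F)*a*A) * H1 + ((1 : F)*b*B + (-1 : F)*a + (1 : F)*a*A) * K1 + ((1 : F)*b + (-1 : F)*b*A + (1 : F)*a*B) * H2 + ((-1 : F)*b + (1 : F)*b*A + (-1 : F)*a*B) * K2 + ((1 : F)*d.1 + (-1 : F)*c.1 + (1 : F)*B*B*d.1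 + (-1 : F)*B*B*c.1 + (-2 : F)*A*d.1 + (2 : F)*A*c.1 + (1 : F)*A*A*d.1 + (-1 : F)*A*A*c.1) * hab
    have key2 : ((2 : F) - 2 * A) * (c.2 - d.2) = 0 := by
      linear_combination ((1 : F)*b*B*B + (-1 : F)*b*A + (1 : F)*b*A*A + (-1 : F)*a*B) * H3 + ((-1 : F)*b*B*B + (1 : F)*b*A + (-1 : F)*b*A*A + (1 : F)*a*B) * K3 + ((-1 : F)*b*B + (-1 : F)*a*B*B + (1 : F)*a*A + (-1 : F)*a*A*A) * H4 + ((1 : F)*b*B + (1 : F)*a*B*B + (-1 : F)*a*A + (1 : F)*a*A*A) * K4 + ((1 : F)*d.2 + (-1 : F)*c.2 + (-1 : F)*b*d.1 + (1 : F)*b*c.1 + (-1 : F)*b*B*d.2 + (1 : F)*b*B*c.2 + (1 : F)*b*A*d.1 + (-1 : F)*b*A*c.1 + (-1 : F)*b*b*B*d.1 + (1 : F)*b*b*B*c.1 + (1 : F)*b*b*B*B*d.2 + (-1 : F)*b*b*B*B*c.2 + (-1 : F)*b*b*A*d.2 + (1 : F)*b*b*A*c.2 + (1 : F)*b*b*A*A*d.2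 + (-1 : F)*b*b*A*A*c.2 + (1 : F)*a*d.2 + (-1 : F)*a*c.2 + (-1 : F)*a*B*d.1 + (1 : F)*a*B*c.1 + (-1 : F)*a*A*d.2 + (1 : F)*a*A*c.2 + (-1 : F)*a*a*B*d.1 + (1 : F)*a*a*B*c.1 + (1 : F)*a*a*B*B*d.2 + (-1 : F)*a*a*B*B*c.2 + (-1 : F)*a*a*A*d.2 + (1 : F)*a*a*A*c.2 + (1 : F)*a*a*A*A*d.2 + (-1 : F)*a*a*A*A*c.2) * hAB + ((1 : F)*b + (-1 : F)*b*A + (1 : F)*a*B) * H1 + ((-1 : F)*b + (1 : F)*b*A + (-1 : F)*a*B) * K1 + ((1 : F)*b*B + (-1 : F)*a + (1 : F)*a*A) * H2 + ((-1 : F)*b*B + (1 : F)*a + (-1 : F)*a*A) * K2 + ((1 : F)*d.2 + (-1 : F)*c.2 + (1 : F)*B*B*d.2 + (-1 : F)*B*B*c.2 + (-2 : F)*A*d.2 + (2 : F)*A*c.2 + (1 : F)*A*A*d.2 + (-1 : F)*A*A*c.2) * hab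
    have e1 : c.1 = d.1 := by
      have := (mul_eq_zero.mp key1).resolve_left hden
      linear_combination this
    have e2 : c.2 = d.2 := by
      have := (mul_eq_zero.mp key2).resolve_left hden
      linear_combination this
    exact Prod.ext e1 e2
  rw [← Set.ncard_image_of_injOn hinj]
  congr 1
  ext p
  constructor
  · rintro ⟨⟨⟨a, b⟩, c⟩, hx, rfl⟩
    exact (mem_tset_iff.mp hx).1
  · intro hp
    obtain ⟨a, b⟩ := p
    have hab : a ^ 2 + b ^ 2 = 1 := hp
    set c : F × F := (((2 : F) - 2 * A)⁻¹ * ((-1 : F)*b*B*t.1 + (-1 : F)*b*B*B*t.2 + (1 : F)*b*A*t.2 + (-1 : F)*b*A*A*t.2 + (1 : F)*b*b*t.1 + (-1 : F)*b*b*B*t.2 + (-1 : F)*b*b*A*t.1 + (1 : F)*a*B*t.2 + (-1 : F)*a*B*B*t.1 + (1 : F)*a*A*t.1 + (-1 : F)*a*A*A*t.1 + (1 : F)*a*a*t.1 + (-1 : F)*a*a*B*t.2 + (-1 : F)*a*a*A*t.1),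
      ((2 : F) - 2 * A)⁻¹ * ((1 : F)*b*B*t.2 + (-1 : F)*b*B*B*t.1 + (1 : F)*b*A*t.1 + (-1 : F)*b*A*A*t.1 + (1 : F)*b*b*t.2 + (1 : F)*b*b*B*t.1 + (-1 : F)*b*b*A*t.2 + (1 : F)*a*B*t.1 + (1 : F)*a*B*B*t.2 + (-1 : F)*a*A*t.2 + (1 : F)*a*A*A*t.2 + (1 : F)*a*a*t.2 + (1 : F)*a*a*B*t.1 + (-1 : F)*a*a*A*t.2)) with hcdef
    have h1 : ((2 : F) - 2 * A) * c.1 = ((-1 : F)*b*B*t.1 + (-1 : F)*b*B*B*t.2 + (1 : F)*b*A*t.2 + (-1 : F)*b*A*A*t.2 + (1 : F)*b*b*t.1 + (-1 : F)*b*b*B*t.2 + (-1 : F)*b*b*A*t.1 + (1 : F)*a*B*t.2 + (-1 : F)*a*B*B*t.1 + (1 : F)*a*A*t.1 + (-1 : F)*a*A*A*t.1 + (1 : F)*a*a*t.1 + (-1 : F)*a*a*B*t.2 + (-1 : F)*a*a*A*t.1) := by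
      rw [hcdef, ← mul_assoc, mul_inv_cancel₀ hden, one_mul]
    have h2' : ((2 : F) - 2 * A) * c.2 = ((1 : F)*b*B*t.2 + (-1 : F)*b*B*B*t.1 + (1 : F)*b*A*t.1 + (-1 : F)*b*A*A*t.1 + (1 : F)*b*b*t.2 + (1 : F)*b*b*B*t.1 + (-1 : F)*b*b*A*t.2 + (1 : F)*a*B*t.1 + (1 : F)*a*B*B*t.2 + (-1 : F)*a*A*t.2 + (1 : F)*a*A*A*t.2 + (1 : F)*a*a*t.2 + (1 : F)*a*a*B*t.1 + (-1 : F)*a*a*A*t.2) := by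
      rw [hcdef, ← mul_assoc, mul_inv_cancel₀ hden, one_mul]
    refine ⟨((a, b), c), mem_tset_iff.mpr ⟨hab, ⟨?_, ?_⟩, ?_, ?_⟩, rfl⟩
    · have key : ((2 : F) - 2 * A) * (a * c.1 + b * c.2 + c.1) = 0 := by
        linear_combination ((1 : F) + (1 : F)*a) * h1 + ((1 : F)*b) * h2' + ((1 : F)*t.1 + (-1 : F)*B*B*t.1 + (-1 : F)*A*A*t.1 + (1 : F)*b*t.2 + (1 : F)*b*B*t.1 + (-1 : F)*b*A*t.2 + (1 : F)*a*t.1 + (-1 : F)*a*B*t.2 + (-1 : F)*a*A*t.1) * hab + ((-1 : F)*t.1 + (-1 : F)*b*t.2 + (-1 : F)*a*t.1) * hAB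
      have := (mul_eq_zero.mp key).resolve_left hden
      linear_combination this
    · have key : ((2 : F) - 2 * A) * (b * c.1 - a * c.2 + c.2) = 0 := by
        linear_combination ((1 : F)*b) * h1 + ((1 : F) + (-1 : F)*a) * h2' + ((1 : F)*t.2 + (-1 : F)*B*B*t.2 + (-1 : F)*A*A*t.2 + (1 : F)*b*t.1 + (-1 : F)*b*B*t.2 + (-1 : F)*b*A*t.1 + (-1 : F)*a*t.2 + (-1 : F)*a*B*t.1 + (1 : F)*a*A*t.2) * hab + ((-1 : F)*t.2 + (-1 : F)*b*t.1 + (1 : F)*a*t.2) * hAB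
      have := (mul_eq_zero.mp key).resolve_left hden
      linear_combination this
    · have key : ((2 : F) - 2 * A) * ((A * a - B * b) * (A * c.1 - B * c.2 + t.1) +
          (A * b + B * a) * (B * c.1 + A * c.2 + t.2) + (A * c.1 - B * c.2 + t.1)) = 0 := by
        linear_combination ((1 : F)*A + (1 : F)*a*B*B + (1 : F)*a*A*A) * h1 + ((-1 : F)*B + (1 : F)*b*B*B + (1 : F)*b*A*A) * h2' + ((-1 : F)*B*t.2 + (-1 : F)*B*B*t.1 + (1 : F)*B*B*B*t.2 + (-1 : F)*B*B*B*B*t.1 + (1 : F)*A*t.1 + (1 : F)*A*B*B*t.1 + (-1 : F)*A*A*t.1 + (1 : F)*A*A*B*t.2 + (-2 : F)*A*A*B*B*t.1 + (1 : F)*A*A*A*t.1 + (-1 : F)*A*A*A*A*t.1 + (1 : F)*b*B*B*t.2 + (1 : F)*b*B*B*B*t.1 + (-1 : F)*b*A*B*B*t.2 + (1 : F)*b*A*A*t.2 + (1 : F)*b*A*A*B*t.1 + (-1 : F)*b*A*A*A*t.2 + (1 : F)*a*B*B*t.1 + (-1 : F)*a*B*B*B*t.2 + (-1 : F)*a*A*B*B*t.1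 + (1 : F)*a*A*A*t.1 + (-1 : F)*a*A*A*B*t.2 + (-1 : F)*a*A*A*A*t.1) * hab + ((-2 : F)*t.1 + (1 : F)*B*t.2 + (-1 : F)*B*B*t.1 + (1 : F)*A*t.1 + (-1 : F)*A*A*t.1 + (2 : F)*b*B*t.1 + (-2 : F)*b*A*t.2 + (-2 : F)*a*B*t.2 + (-2 : F)*a*A*t.1) * hAB
      have := (mul_eq_zero.mp key).resolve_left hden
      linear_combination this
    · have key : ((2 : F) - 2 * A) * ((A * b + B * a) * (A * c.1 - B * c.2 + t.1) -
          (A * a - B * b) * (B * c.1 + A * c.2 + t.2) + (B * c.1 + A * c.2 + t.2)) = 0 := by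
        linear_combination ((1 : F)*B + (1 : F)*b*B*B + (1 : F)*b*A*A) * h1 + ((1 : F)*A + (-1 : F)*a*B*B + (-1 : F)*a*A*A) * h2' + ((1 : F)*B*t.1 + (-1 : F)*B*B*t.2 + (-1 : F)*B*B*B*t.1 + (-1 : F)*B*B*B*B*t.2 + (1 : F)*A*t.2 + (1 : F)*A*B*B*t.2 + (-1 : F)*A*A*t.2 + (-1 : F)*A*A*B*t.1 + (-2 : F)*A*A*B*B*t.2 + (1 : F)*A*A*A*t.2 + (-1 : F)*A*A*A*A*t.2 + (1 : F)*b*B*B*t.1 + (-1 : F)*b*B*B*B*t.2 + (-1 : F)*b*A*B*B*t.1 + (1 : F)*b*A*A*t.1 + (-1 : F)*b*A*A*B*t.2 + (-1 : F)*b*A*A*A*t.1 + (-1 : F)*a*B*B*t.2 + (-1 : F)*a*B*B*B*t.1 + (1 : F)*a*A*B*B*t.2 + (-1 : F)*a*A*A*t.2 + (-1 : F)*a*A*A*B*t.1 + (1 : F)*a*A*A*A*t.2) * hab + ((-2 : F)*t.2 + (-1 : F)*B*t.1 + (-1 : F)*B*B*t.2 + (1 : F)*A*t.2 + (-1 : F)*A*A*t.2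 + (-2 : F)*b*B*t.2 + (-2 : F)*b*A*t.1 + (-2 : F)*a*B*t.1 + (2 : F)*a*A*t.2) * hAB
      have := (mul_eq_zero.mp key).resolve_left hden
      linear_combination this


lemma circle_ncard_one {F : Type*} [Field F] [Fintype F] (h2 : (2 : F) ≠ 0) {i : F}
    (hi : i ^ 2 = -1) :
    {p : F × F | p.1 ^ 2 + p.2 ^ 2 = 1}.ncard = Fintype.card F - 1 := by
  have hi0 : i ≠ 0 := by
    intro h
    rw [h] at hi
    simp only [ne_eq, OfNat.ofNat_ne_zero, not_false_eq_true, zero_pow] at hi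
    exact one_ne_zero (neg_eq_zero.mp hi.symm)
  have hretr : ∀ x : F, x ≠ 0 → (x + x⁻¹) / 2 + i * ((x - x⁻¹) / (2 * i)) = x := by
    intro x hx
    field_simp
    ring
  have himg : {p : F × F | p.1 ^ 2 + p.2 ^ 2 = 1} =
      (fun x : F => ((x + x⁻¹) / 2, (x - x⁻¹) / (2 * i))) '' {x : F | x ≠ 0} := by
    ext p
    simp only [Set.mem_setOf_eq, Set.mem_image]
    constructor
    · intro hp
      have hx0 : p.1 + i * p.2 ≠ 0 := by
        intro h0
        have hz : p.1 ^ 2 + p.2 ^ 2 = 0 := by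
          have hp1 : p.1 = -(i * p.2) := by linear_combination h0
          rw [hp1]
          linear_combination (p.2 ^ 2) * hi
        rw [hz] at hp
        exact one_ne_zero hp.symm
      have hxinv : (p.1 + i * p.2)⁻¹ = p.1 - i * p.2 := by
        apply inv_eq_of_mul_eq_one_right
        linear_combination hp - p.2 ^ 2 * hi
      refine ⟨p.1 + i * p.2, hx0, ?_⟩
      rw [hxinv]
      have e1 : (p.1 + i * p.2 + (p.1 - i * p.2)) / 2 = p.1 := by
        field_simp
        ring
      have e2 : (p.1 + i * p.2 - (p.1 - i * p.2)) / (2 * i) = p.2 := by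
        field_simp
        ring
      exact Prod.ext e1 e2
    · rintro ⟨x, hx, rfl⟩
      show _ ^ 2 + _ ^ 2 = 1
      field_simp
      linear_combination (x ^ 2 - 1) ^ 2 * hi
  have hinj : Set.InjOn (fun x : F => ((x + x⁻¹) / 2, (x - x⁻¹) / (2 * i))) {x : F | x ≠ 0} := by
    rintro x hx y hy h
    have h' := congrArg (fun p : F × F => p.1 + i * p.2) h
    simp only at h'
    rwa [hretr x hx, hretr y hy] at h'
  rw [himg, Set.ncard_image_of_injOn hinj]
  have : {x : F | x ≠ 0} = Set.univ \ {0} := by ext; simp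
  rw [this, Set.ncard_diff_singleton_of_mem (Set.mem_univ 0), Set.ncard_univ,
    Nat.card_eq_fintype_card]

lemma circle_ncard_three {F : Type*} [Field F] [Fintype F] (h2 : (2 : F) ≠ 0)
    (hns : ∀ m : F, 1 + m ^ 2 ≠ 0) :
    {p : F × F | p.1 ^ 2 + p.2 ^ 2 = 1}.ncard = Fintype.card F + 1 := by
  have hretr : ∀ m : F, (2 * m / (1 + m ^ 2)) / (1 + (1 - m ^ 2) / (1 + m ^ 2)) = m := by
    intro m
    have key : 1 + (1 - m ^ 2) / (1 + m ^ 2) = 2 / (1 + m ^ 2) := by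
      field_simp [hns m]
      ring
    rw [key, div_div_div_eq]
    rw [div_eq_iff (mul_ne_zero (hns m) h2)]
    ring
  have himg : {p : F × F | p.1 ^ 2 + p.2 ^ 2 = 1} =
      insert ((-1 : F), (0 : F))
        ((fun m : F => ((1 - m ^ 2) / (1 + m ^ 2), 2 * m / (1 + m ^ 2))) '' Set.univ) := by
    ext p
    simp only [Set.mem_setOf_eq, Set.mem_insert_iff, Set.mem_image, Set.mem_univ, true_and]
    constructor
    · intro hp
      by_cases h1 : p.1 = -1
      · left
        have hp2 : p.2 ^ 2 = 0 := by
          rw [h1] at hp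
          linear_combination hp
        exact Prod.ext h1 (pow_eq_zero_iff two_ne_zero |>.mp hp2)
      · right
        have hden : 1 + p.1 ≠ 0 := fun h => h1 (by linear_combination h)
        have hY : (1 + p.1) ^ 2 + p.2 ^ 2 ≠ 0 := by
          intro h0
          have h2' : (2 : F) * (1 + p.1) = 0 := by linear_combination h0 - hp
          exact h2 ((mul_eq_zero.mp h2').resolve_right hden)
        refine ⟨p.2 / (1 + p.1), Prod.ext ?_ ?_⟩
        · show (1 - (p.2 / (1 + p.1)) ^ 2) / (1 + (p.2 / (1 + p.1)) ^ 2) = p.1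
          rw [div_pow, one_sub_div (pow_ne_zero 2 hden), one_add_div (pow_ne_zero 2 hden),
            div_div_div_eq, div_eq_iff (mul_ne_zero (pow_ne_zero 2 hden) hY)]
          linear_combination (-(1 + p.1) ^ 3) * hp
        · show 2 * (p.2 / (1 + p.1)) / (1 + (p.2 / (1 + p.1)) ^ 2) = p.2
          rw [div_pow, mul_div_assoc', one_add_div (pow_ne_zero 2 hden),
            div_div_div_eq, div_eq_iff (mul_ne_zero hden hY)]
          linear_combination (-(p.2) * (1 + p.1)) * hp
    · intro h
      rcases h with h | ⟨m, rfl⟩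
      · rw [h]
        norm_num
      · show ((1 - m ^ 2) / (1 + m ^ 2)) ^ 2 + (2 * m / (1 + m ^ 2)) ^ 2 = 1
        rw [div_pow, div_pow, div_add_div _ _ (pow_ne_zero 2 (hns m)) (pow_ne_zero 2 (hns m)),
          div_eq_one_iff_eq (mul_ne_zero (pow_ne_zero 2 (hns m)) (pow_ne_zero 2 (hns m)))]
        ring
  rw [himg]
  have hnot : ((-1 : F), (0 : F)) ∉
      (fun m : F => ((1 - m ^ 2) / (1 + m ^ 2), 2 * m / (1 + m ^ 2))) '' Set.univ := by
    rintro ⟨m, -, hm⟩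
    have h' := congrArg Prod.fst hm
    simp only at h'
    rw [div_eq_iff (hns m)] at h'
    exact h2 (by linear_combination h')
  have hinj : Set.InjOn (fun m : F => ((1 - m ^ 2) / (1 + m ^ 2), 2 * m / (1 + m ^ 2)))
      Set.univ := by
    rintro x - y - h
    have h' := congrArg (fun p : F × F => p.2 / (1 + p.1)) h
    simp only at h'
    rwa [hretr x, hretr y] at h'
  rw [Set.ncard_insert_of_notMem hnot, Set.ncard_image_of_injOn hinj, Set.ncard_univ,
    Nat.card_eq_fintype_card]

lemma tset_trans_ncard {F : Type*} [Field F] [Fintype F] (h2 : (2 : F) ≠ 0) {d : F × F}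
    (hn : d.1 ^ 2 + d.2 ^ 2 ≠ 0) :
    (Tset (1 : F) 0 d).ncard = Fintype.card F := by
  have himg : Tset (1 : F) 0 d =
      (fun s : F => (((d.2 ^ 2 - d.1 ^ 2) / (d.1 ^ 2 + d.2 ^ 2),
        -(2 * d.1 * d.2) / (d.1 ^ 2 + d.2 ^ 2)), (s * d.1, s * d.2))) '' Set.univ := by
    apply Set.Subset.antisymm
    · rintro ⟨⟨a, b⟩, c⟩ hx
      obtain ⟨hab, ⟨H1, H2⟩, H3, H4⟩ := mem_tset_iff.mp hx
      have G1 : a * d.1 + b * d.2 + d.1 = 0 := by linear_combination H3 - H1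
      have G2 : b * d.1 - a * d.2 + d.2 = 0 := by linear_combination H4 - H2
      have hu : c.1 * d.2 - c.2 * d.1 = 0 := by
        have h2u : 2 * (c.1 * d.2 - c.2 * d.1) = 0 := by
          linear_combination d.2 * H1 - c.2 * G1 - d.1 * H2 + c.1 * G2
        exact (mul_eq_zero.mp h2u).resolve_left h2
      refine ⟨(c.1 * d.1 + c.2 * d.2) / (d.1 ^ 2 + d.2 ^ 2), Set.mem_univ _, ?_⟩
      simp only [Prod.mk.injEq, Prod.ext_iff]
      refine ⟨⟨?_, ?_⟩, ?_, ?_⟩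
      · rw [div_eq_iff hn]
        linear_combination (-d.1) * G1 + d.2 * G2
      · rw [div_eq_iff hn]
        linear_combination (-d.2) * G1 - d.1 * G2
      · rw [div_mul_eq_mul_div, div_eq_iff hn]
        linear_combination (-d.2) * hu
      · rw [div_mul_eq_mul_div, div_eq_iff hn]
        linear_combination d.1 * hu
    · rintro - ⟨s, -, rfl⟩
      rw [mem_tset_iff]
      refine ⟨?_, ⟨?_, ?_⟩, ?_, ?_⟩ <;>
        · field_simp
          ring
  have hd10 : d.1 ≠ 0 ∨ d.2 ≠ 0 := by
    by_contra hcon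
    push_neg at hcon
    exact hn (by rw [hcon.1, hcon.2]; ring)
  have hinj : Set.InjOn (fun s : F => (((d.2 ^ 2 - d.1 ^ 2) / (d.1 ^ 2 + d.2 ^ 2),
      -(2 * d.1 * d.2) / (d.1 ^ 2 + d.2 ^ 2)), (s * d.1, s * d.2))) Set.univ := by
    rintro x - y - h
    simp only [Prod.mk.injEq] at h
    obtain ⟨-, h1, h2'⟩ := h
    rcases hd10 with hd | hd
    · exact mul_right_cancel₀ hd h1
    · exact mul_right_cancel₀ hd h2'
  rw [himg, Set.ncard_image_of_injOn hinj, Set.ncard_univ, Nat.card_eq_fintype_card]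

lemma tset_iso_ncard {F : Type*} [Field F] (h2 : (2 : F) ≠ 0) {d : F × F} (hd0 : d ≠ 0)
    (hn : d.1 ^ 2 + d.2 ^ 2 = 0) : (Tset (1 : F) 0 d).ncard = 0 := by
  have hempty : Tset (1 : F) 0 d = ∅ := by
    rw [Set.eq_empty_iff_forall_notMem]
    rintro ⟨⟨a, b⟩, c⟩ hx
    obtain ⟨hab, ⟨H1, H2⟩, H3, H4⟩ := mem_tset_iff.mp hx
    have G1 : a * d.1 + b * d.2 + d.1 = 0 := by linear_combination H3 - H1
    have G2 : b * d.1 - a * d.2 + d.2 = 0 := by linear_combination H4 - H2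
    have h1 : (2 : F) * d.1 ^ 2 = 0 := by
      linear_combination d.1 * G1 - d.2 * G2 - a * hn + hn
    have hd1 : d.1 = 0 := pow_eq_zero_iff two_ne_zero |>.mp ((mul_eq_zero.mp h1).resolve_left h2)
    have hd2 : d.2 = 0 := by
      have h22 : d.2 ^ 2 = 0 := by
        rw [hd1] at hn
        linear_combination hn
      exact pow_eq_zero_iff two_ne_zero |>.mp h22
    exact hd0 (Prod.ext hd1 hd2)
  rw [hempty, Set.ncard_empty]

theorem decompositions_into_reflections (F : Type) [Field F] [Fintype F]
    (hchar : 2 < ringChar F) :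
    (∀ a b : F, a ^ 2 + b ^ 2 = 1 → (a, b) ≠ ((1 : F), (0 : F)) → ∀ u : F × F,
      (Fintype.card F % 4 = 1 → (reflDecomps (rotAbout a b u)).ncard = Fintype.card F - 1) ∧
      (Fintype.card F % 4 = 3 → (reflDecomps (rotAbout a b u)).ncard = Fintype.card F + 1)) ∧
    (∀ d : F × F, nrm d ≠ 0 →
      (reflDecomps (fun v => v + d)).ncard = Fintype.card F) ∧
    (∀ d : F × F, d ≠ 0 → nrm d = 0 →
      (reflDecomps (fun v => v + d)).ncard = 0) := by
  have h2 : (2 : F) ≠ 0 := by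
    intro h
    have hdvd : ringChar F ∣ 2 := (ringChar.spec F 2).mp (by exact_mod_cast h)
    have := Nat.le_of_dvd (by norm_num) hdvd
    omega
  have htr : ∀ d : F × F, (fun v : F × F => v + d) = fun v => rotLin 1 0 v + d := by
    intro d
    funext v
    simp only [rotLin, Prod.ext_iff, Prod.fst_add, Prod.snd_add]
    constructor <;> ring
  refine ⟨?_, ?_, ?_⟩
  · intro a b hab hne u
    have hA : a ≠ 1 := by
      intro ha
      apply hne
      have hb2 : b ^ 2 = 0 := by rw [ha] at hab; linear_combination hab
      have hb : b = 0 := pow_eq_zero_iff two_ne_zero |>.mp hb2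
      rw [ha, hb]
    have hrot : rotAbout a b u = fun v => rotLin a b v + (u - rotLin a b u) := by
      funext v
      simp only [rotAbout, rotLin, Prod.ext_iff, Prod.fst_add, Prod.snd_add, Prod.fst_sub,
        Prod.snd_sub]
      constructor <;> ring
    have hcount : (reflDecomps (rotAbout a b u)).ncard
        = {p : F × F | p.1 ^ 2 + p.2 ^ 2 = 1}.ncard := by
      rw [hrot, ncard_decomps hab _ h2, tset_rot_ncard hab hA h2]
    constructor
    · intro hq
      have hsq : IsSquare (-1 : F) := FiniteField.isSquare_neg_one_iff.mpr (by omega)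
      obtain ⟨r, hr⟩ := hsq
      have hi : r ^ 2 = -1 := by linear_combination -hr
      rw [hcount, circle_ncard_one h2 hi]
    · intro hq
      have hns : ∀ m : F, 1 + m ^ 2 ≠ 0 := by
        intro m hm
        have hsq : IsSquare (-1 : F) := ⟨m, by linear_combination -hm⟩
        rw [FiniteField.isSquare_neg_one_iff] at hsq
        omega
      rw [hcount, circle_ncard_three h2 hns]
  · intro d hd
    have hn : d.1 ^ 2 + d.2 ^ 2 ≠ 0 := hd
    rw [htr d, ncard_decomps (by norm_num) d h2, tset_trans_ncard h2 hn]
  · intro d hd0 hd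
    have hn : d.1 ^ 2 + d.2 ^ 2 = 0 := hd
    rw [htr d, ncard_decomps (by norm_num) d h2, tset_iso_ncard h2 hd0 hn]
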